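/- Let μ = (l₁, c₁, r₁) and ν = (l₂, c₂, r₂) be triangular fuzzy numbers. Then d_E(μ, ν) = sup_{α ∈ (0,1]} of the Hausdorff distance between the α-level sets of μ and ν equals max(|l₁ − l₂|, |c₁ − c₂|, |r₁ − r₂|). -/

import Mathlib

lemma le_infDist' {s : Set ℝ} {x m : ℝ} (hs : s.Nonempty)
    (h : ∀ y ∈ s, m ≤ dist x y) : m ≤ Metric.infDist x s := by
  by_contra hc
  push_neg at hc
  obtain ⟨y, hy, hd⟩ := (Metric.infDist_lt_iff hs).1 hc
  exact absurd (h y hy) (by linarith)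

lemma hd_Icc (a b c d : ℝ) (hab : a ≤ b) (hcd : c ≤ d) :
    Metric.hausdorffDist (Set.Icc a b) (Set.Icc c d) = max |a - c| |b - d| := by
  have hM1 : |a - c| ≤ max |a - c| |b - d| := le_max_left _ _
  have hM2 : |b - d| ≤ max |a - c| |b - d| := le_max_right _ _
  have hMnn : (0:ℝ) ≤ max |a - c| |b - d| := le_trans (abs_nonneg _) hM1
  have hne1 : (Set.Icc a b).Nonempty := Set.nonempty_Icc.2 hab
  have hne2 : (Set.Icc c d).Nonempty := Set.nonempty_Icc.2 hcd
  have hfin : EMetric.hausdorffEdist (Set.Icc a b) (Set.Icc c d) ≠ ⊤ :=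
    Metric.hausdorffEdist_ne_top_of_nonempty_of_bounded hne1 hne2
      (Metric.isBounded_Icc a b) (Metric.isBounded_Icc c d)
  apply le_antisymm
  · apply Metric.hausdorffDist_le_of_infDist hMnn
    · intro x hx
      obtain ⟨hx1, hx2⟩ := hx
      rcases le_total x c with hxc | hxc
      · have hy : c ∈ Set.Icc c d := Set.left_mem_Icc.2 hcd
        refine le_trans (Metric.infDist_le_dist_of_mem hy) ?_
        rw [Real.dist_eq, abs_of_nonpos (by linarith)]
        have : c - a ≤ |a - c| := by rw [abs_sub_comm]; exact le_abs_self _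
        linarith
      · rcases le_total x d with hxd | hxd
        · have hy : x ∈ Set.Icc c d := ⟨hxc, hxd⟩
          refine le_trans (Metric.infDist_le_dist_of_mem hy) ?_
          rw [Real.dist_eq, sub_self, abs_zero]; exact hMnn
        · have hy : d ∈ Set.Icc c d := Set.right_mem_Icc.2 hcd
          refine le_trans (Metric.infDist_le_dist_of_mem hy) ?_
          rw [Real.dist_eq, abs_of_nonneg (by linarith)]
          have : b - d ≤ |b - d| := le_abs_self _
          linarith
    · intro x hx
      obtain ⟨hx1, hx2⟩ := hx
      rcases le_total x a with hxa | hxa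
      · have hy : a ∈ Set.Icc a b := Set.left_mem_Icc.2 hab
        refine le_trans (Metric.infDist_le_dist_of_mem hy) ?_
        rw [Real.dist_eq, abs_of_nonpos (by linarith)]
        have : a - c ≤ |a - c| := le_abs_self _
        linarith
      · rcases le_total x b with hxb | hxb
        · have hy : x ∈ Set.Icc a b := ⟨hxa, hxb⟩
          refine le_trans (Metric.infDist_le_dist_of_mem hy) ?_
          rw [Real.dist_eq, sub_self, abs_zero]; exact hMnn
        · have hy : b ∈ Set.Icc a b := Set.right_mem_Icc.2 hab
          refine le_trans (Metric.infDist_le_dist_of_mem hy) ?_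
          rw [Real.dist_eq, abs_of_nonneg (by linarith)]
          have : d - b ≤ |b - d| := by rw [abs_sub_comm]; exact le_abs_self _
          linarith
  · apply max_le
    · rcases le_total a c with h | h
      · refine le_trans ?_ (Metric.infDist_le_hausdorffDist_of_mem
          (Set.left_mem_Icc.2 hab) hfin)
        apply le_infDist' hne2
        intro y hy
        rw [Real.dist_eq]
        have h1 := hy.1
        have h2 := neg_abs_le (a - y)
        have h4 : |a - c| = c - a := by rw [abs_sub_comm]; exact abs_of_nonneg (by linarith)
        linarith
      · rw [Metric.hausdorffDist_comm]
        refine le_trans ?_ (Metric.infDist_le_hausdorffDist_of_mem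
          (Set.left_mem_Icc.2 hcd) (by rw [Metric.hausdorffEDist_comm]; exact hfin))
        apply le_infDist' hne1
        intro y hy
        rw [Real.dist_eq]
        have h1 := hy.1
        have h2 := neg_abs_le (c - y)
        have h4 : |a - c| = a - c := abs_of_nonneg (by linarith)
        linarith
    · rcases le_total b d with h | h
      · rw [Metric.hausdorffDist_comm]
        refine le_trans ?_ (Metric.infDist_le_hausdorffDist_of_mem
          (Set.right_mem_Icc.2 hcd) (by rw [Metric.hausdorffEDist_comm]; exact hfin))
        apply le_infDist' hne1
        intro y hy
        rw [Real.dist_eq]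
        have h1 := hy.2
        have h2 := le_abs_self (d - y)
        have h4 : |b - d| = d - b := by rw [abs_sub_comm]; exact abs_of_nonneg (by linarith)
        linarith
      · refine le_trans ?_ (Metric.infDist_le_hausdorffDist_of_mem
          (Set.right_mem_Icc.2 hab) hfin)
        apply le_infDist' hne2
        intro y hy
        rw [Real.dist_eq]
        have h1 := hy.2
        have h2 := le_abs_self (b - y)
        have h4 : |b - d| = b - d := abs_of_nonneg (by linarith)
        linarith

/-- The α-level set of the triangular fuzzy number `(l, c, r)`:
the closed interval `[c - (1-α)(c-l), c + (1-α)(r-c)]`. -/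
noncomputable def tfnLevel (l c r α : ℝ) : Set ℝ :=
  Set.Icc (c - (1 - α) * (c - l)) (c + (1 - α) * (r - c))

/-- For two triangular fuzzy numbers `μ = (l₁, c₁, r₁)` and `ν = (l₂, c₂, r₂)`, the
distance `d_E(μ, ν)`, i.e. the supremum over `α ∈ (0,1]` of the Hausdorff distance
between the α-level sets, equals `max (|l₁ - l₂|, |c₁ - c₂|, |r₁ - r₂|)`. -/
theorem tfn_dE_eq_max (l₁ c₁ r₁ l₂ c₂ r₂ : ℝ)
    (h₁ : l₁ ≤ c₁ ∧ c₁ ≤ r₁) (h₂ : l₂ ≤ c₂ ∧ c₂ ≤ r₂) :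
    (⨆ α : Set.Ioc (0 : ℝ) 1,
      Metric.hausdorffDist (tfnLevel l₁ c₁ r₁ (α : ℝ)) (tfnLevel l₂ c₂ r₂ (α : ℝ))) =
      max |l₁ - l₂| (max |c₁ - c₂| |r₁ - r₂|) := by
  obtain ⟨h1l, h1r⟩ := h₁
  obtain ⟨h2l, h2r⟩ := h₂
  set F : ℝ → ℝ := fun α =>
    max |α * (c₁ - c₂) + (1 - α) * (l₁ - l₂)| |α * (c₁ - c₂) + (1 - α) * (r₁ - r₂)| with hF
  set M : ℝ := max |l₁ - l₂| (max |c₁ - c₂| |r₁ - r₂|) with hM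
  have hFeq : ∀ α ∈ Set.Ioc (0:ℝ) 1,
      Metric.hausdorffDist (tfnLevel l₁ c₁ r₁ α) (tfnLevel l₂ c₂ r₂ α) = F α := by
    intro α hα
    have hα1 : (0:ℝ) ≤ 1 - α := by linarith [hα.2]
    rw [tfnLevel, tfnLevel, hd_Icc _ _ _ _ (by nlinarith) (by nlinarith)]
    simp only [hF]
    congr 1 <;> congr 1 <;> ring
  have hFle : ∀ α ∈ Set.Icc (0:ℝ) 1, F α ≤ M := by
    intro α hα
    obtain ⟨h0, h1⟩ := hα
    have key : ∀ u v : ℝ, |u| ≤ M → |v| ≤ M → |α * u + (1 - α) * v| ≤ M := by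
      intro u v hu hv
      calc |α * u + (1 - α) * v| ≤ |α * u| + |(1 - α) * v| := abs_add_le _ _
        _ = α * |u| + (1 - α) * |v| := by
            rw [abs_mul α u, abs_mul (1 - α) v, abs_of_nonneg h0,
              abs_of_nonneg (show (0:ℝ) ≤ 1 - α by linarith)]
        _ ≤ α * M + (1 - α) * M := by
            have := abs_nonneg u
            have := abs_nonneg v
            nlinarith
        _ = M := by ring
    exact max_le (key _ _ (le_trans (le_max_left _ _) (le_max_right _ _))
        (le_max_left _ _))
      (key _ _ (le_trans (le_max_left _ _) (le_max_right _ _))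
        (le_trans (le_max_right _ _) (le_max_right _ _)))
  have hbdd : BddAbove (Set.range fun α : Set.Ioc (0:ℝ) 1 =>
      Metric.hausdorffDist (tfnLevel l₁ c₁ r₁ (α : ℝ)) (tfnLevel l₂ c₂ r₂ (α : ℝ))) := by
    refine ⟨M, ?_⟩
    rintro x ⟨α, rfl⟩
    show Metric.hausdorffDist (tfnLevel l₁ c₁ r₁ (α : ℝ)) (tfnLevel l₂ c₂ r₂ (α : ℝ)) ≤ M
    rw [hFeq α α.2]
    exact hFle α ⟨le_of_lt α.2.1, α.2.2⟩
  apply le_antisymm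
  · apply ciSup_le
    intro α
    rw [hFeq α α.2]
    exact hFle α ⟨le_of_lt α.2.1, α.2.2⟩
  · set S := ⨆ α : Set.Ioc (0:ℝ) 1,
      Metric.hausdorffDist (tfnLevel l₁ c₁ r₁ (α : ℝ)) (tfnLevel l₂ c₂ r₂ (α : ℝ)) with hS
    have hle : ∀ α : Set.Ioc (0:ℝ) 1, F α ≤ S := by
      intro α
      rw [← hFeq α α.2]
      exact le_ciSup hbdd α
    have hc : |c₁ - c₂| ≤ S := by
      have := hle ⟨1, by norm_num⟩
      simpa [hF] using this
    have hFcont : Continuous F := by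
      apply Continuous.max <;> exact ((continuous_id.mul continuous_const).add
        ((continuous_const.sub continuous_id).mul continuous_const)).abs
    have hF0 : F 0 ≤ S := by
      have hcl : (0:ℝ) ∈ closure (Set.Ioc (0:ℝ) 1) := by
        rw [closure_Ioc (by norm_num : (0:ℝ) ≠ 1)]
        exact ⟨le_refl _, by norm_num⟩
      haveI hne : Filter.NeBot (nhdsWithin (0:ℝ) (Set.Ioc (0:ℝ) 1)) :=
        mem_closure_iff_nhdsWithin_neBot.1 hcl
      have ht : Filter.Tendsto F (nhdsWithin (0:ℝ) (Set.Ioc (0:ℝ) 1)) (nhds (F 0)) :=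
        (hFcont.tendsto 0).mono_left nhdsWithin_le_nhds
      refine le_of_tendsto ht ?_
      filter_upwards [self_mem_nhdsWithin] with α hα
      exact hle ⟨α, hα⟩
    have hl : |l₁ - l₂| ≤ S := le_trans (by simp [hF]) hF0
    have hr : |r₁ - r₂| ≤ S := le_trans (by simp [hF]) hF0
    exact max_le hl (max_le hc hr)
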